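/- arXiv:2409.06058 — 2 statements merged into one kernel-verified Lean document; each statement's English description precedes it below -/
import Mathlib

section
/- Suppose x ∈ (0,1/2) is nonsingular. Then there exists an open interval J containing x such that for every y ∈ J, p(y) = (Λ/q)·|S₋(x)·e(2NΛy) − S₊(x)|². -/
noncomputable def e (x : ℝ) : ℂ := Complex.exp (2 * Real.pi * Complex.I * x)

noncomputable def G (a k : ℤ) (q : ℕ) : ℂ :=
  ∑ ℓ ∈ Finset.range q, e (((a * ℓ ^ 2 + k * ℓ : ℤ) : ℝ) / q)

noncomputable def invMod (a : ℤ) (q : ℕ) : ℕ := ZMod.val ((a : ZMod q)⁻¹)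

noncomputable def cc (a : ℤ) (q : ℕ) (k : ℤ) : ℂ :=
  if Odd q then e ((invMod (4 * a) q : ℝ) * (k : ℝ) ^ 2 / q)
  else if Even (k + (q : ℤ) / 2) then
    (Real.sqrt 2 : ℂ) * e ((invMod a q : ℝ) * (k : ℝ) ^ 2 / (4 * q))
  else 0

noncomputable def Iset (Λ : ℝ) (q : ℕ) (x : ℝ) : Finset ℤ :=
  Finset.Icc ⌈x * q - q / (2 * Λ)⌉ ⌊x * q + q / (2 * Λ)⌋

noncomputable def pden (N q : ℕ) (Λ : ℝ) (a : ℤ) (x : ℝ) : ℝ :=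
  (4 * Λ / q) * (Norm.norm (∑ k ∈ Iset Λ q x,
    cc a q k * (Real.sin (2 * Real.pi * N * Λ * (x - k / q)) : ℂ))) ^ 2

noncomputable def Splus (N q : ℕ) (Λ : ℝ) (a : ℤ) (x : ℝ) : ℂ :=
  ∑ k ∈ Iset Λ q x, cc a q k * e (N * Λ * k / q)

noncomputable def Sminus (N q : ℕ) (Λ : ℝ) (a : ℤ) (x : ℝ) : ℂ :=
  ∑ k ∈ Iset Λ q x, cc a q k * e (-(N * Λ * k / q))

def Nonsingular (Λ : ℝ) (q : ℕ) (x : ℝ) : Prop :=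
  (Odd q → ∀ n : ℤ, x * q - q / (2 * Λ) ≠ n ∧ x * q + q / (2 * Λ) ≠ n) ∧
  (Even q → ∀ n : ℤ, Even n →
    x * q - q / (2 * Λ) + q / 2 ≠ n ∧ x * q + q / (2 * Λ) + q / 2 ≠ n)

noncomputable def Dnear (x : ℝ) : ℝ := |x - round x|

lemma e_add (s t : ℝ) : e (s + t) = e s * e t := by
  unfold e; rw [← Complex.exp_add]; push_cast; ring_nf

lemma abs_e (t : ℝ) : Norm.norm (e t) = 1 := by
  unfold e
  rw [Complex.norm_exp]
  norm_num [Complex.mul_re, Complex.mul_im]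

lemma sin_e (c : ℝ) : ((Real.sin (2 * Real.pi * c) : ℝ) : ℂ) = (e c - e (-c)) / (2 * Complex.I) := by
  have h : ∀ d : ℝ, e d = Complex.cos (2 * Real.pi * d) + Complex.sin (2 * Real.pi * d) * Complex.I := by
    intro d
    unfold e
    rw [show (2 * (Real.pi:ℂ) * Complex.I * d) = (2 * (Real.pi:ℂ) * d) * Complex.I by ring,
      Complex.exp_mul_I]
  rw [h, h]
  push_cast
  rw [show (2 * (Real.pi:ℂ) * (-c)) = -(2 * Real.pi * c) by ring, Complex.cos_neg, Complex.sin_neg]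
  rw [eq_div_iff (by simp : (2 * Complex.I) ≠ 0)]
  ring

lemma sum_Icc_bot {g : ℤ → ℂ} {c u : ℤ} (h : g c = 0) :
    ∑ k ∈ Finset.Icc (c + 1) u, g k = ∑ k ∈ Finset.Icc c u, g k := by
  conv_rhs => rw [← Finset.sum_erase _ h]
  congr 1
  ext k
  simp only [Finset.mem_Icc, Finset.mem_erase]
  omega

lemma sum_Icc_top {g : ℤ → ℂ} {c u : ℤ} (h : g u = 0) :
    ∑ k ∈ Finset.Icc c (u - 1), g k = ∑ k ∈ Finset.Icc c u, g k := by
  conv_rhs => rw [← Finset.sum_erase _ h]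
  congr 1
  ext k
  simp only [Finset.mem_Icc, Finset.mem_erase]
  omega

lemma sum_Icc_cases {g : ℤ → ℂ} {c u c' u' : ℤ}
    (hc : c' = c ∨ (c' = c + 1 ∧ g c = 0)) (hu : u' = u ∨ (u' = u - 1 ∧ g u = 0)) :
    ∑ k ∈ Finset.Icc c' u', g k = ∑ k ∈ Finset.Icc c u, g k := by
  have h1 : ∑ k ∈ Finset.Icc c' u', g k = ∑ k ∈ Finset.Icc c u', g k := by
    rcases hc with rfl | ⟨rfl, h0⟩
    · rfl
    · exact sum_Icc_bot h0
  rw [h1]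
  rcases hu with rfl | ⟨rfl, h0⟩
  · rfl
  · exact sum_Icc_top h0

lemma ceil_local (t : ℝ) : ∃ δ > 0, ∀ s : ℝ, |s - t| < δ →
    ⌈s⌉ = ⌈t⌉ ∨ (⌈s⌉ = ⌈t⌉ + 1 ∧ t = (⌈t⌉ : ℝ)) := by
  have hle : t ≤ (⌈t⌉ : ℝ) := Int.le_ceil t
  have hgt : (⌈t⌉ : ℝ) - 1 < t := by
    have := Int.ceil_lt_add_one t
    push_cast at this ⊢
    linarith
  by_cases h : t = (⌈t⌉ : ℝ)
  · refine ⟨1, one_pos, fun s hs => ?_⟩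
    rw [abs_sub_lt_iff] at hs
    by_cases hsle : s ≤ t
    · left
      rw [Int.ceil_eq_iff]
      constructor <;> linarith
    · right
      refine ⟨?_, h⟩
      rw [Int.ceil_eq_iff]
      push_cast
      constructor <;> linarith
  · have hlt : t < (⌈t⌉ : ℝ) := lt_of_le_of_ne hle h
    refine ⟨min (t - ((⌈t⌉ : ℝ) - 1)) ((⌈t⌉ : ℝ) - t), lt_min (by linarith) (by linarith),
      fun s hs => ?_⟩
    simp only [lt_min_iff, abs_sub_lt_iff] at hs
    left
    rw [Int.ceil_eq_iff]
    constructor <;> linarith [hs.1.1, hs.1.2, hs.2.1, hs.2.2]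

lemma floor_local (t : ℝ) : ∃ δ > 0, ∀ s : ℝ, |s - t| < δ →
    ⌊s⌋ = ⌊t⌋ ∨ (⌊s⌋ = ⌊t⌋ - 1 ∧ t = (⌊t⌋ : ℝ)) := by
  have hle : (⌊t⌋ : ℝ) ≤ t := Int.floor_le t
  have hlt1 : t < (⌊t⌋ : ℝ) + 1 := Int.lt_floor_add_one t
  by_cases h : t = (⌊t⌋ : ℝ)
  · refine ⟨1, one_pos, fun s hs => ?_⟩
    rw [abs_sub_lt_iff] at hs
    by_cases hsle : t ≤ s
    · left
      rw [Int.floor_eq_iff]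
      constructor <;> linarith
    · right
      refine ⟨?_, h⟩
      rw [Int.floor_eq_iff]
      push_cast
      constructor <;> linarith
  · have hlt : (⌊t⌋ : ℝ) < t := lt_of_le_of_ne hle (fun hh => h hh.symm)
    refine ⟨min (t - (⌊t⌋ : ℝ)) (((⌊t⌋ : ℝ) + 1) - t), lt_min (by linarith) (by linarith),
      fun s hs => ?_⟩
    simp only [lt_min_iff, abs_sub_lt_iff] at hs
    left
    rw [Int.floor_eq_iff]
    constructor <;> linarith [hs.1.1, hs.1.2, hs.2.1, hs.2.2]

lemma cc_boundary_zero (Λ : ℝ) (q : ℕ) (x : ℝ) (a : ℤ)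
    (hns : Nonsingular Λ q x) (j : ℤ)
    (h : x * q - q / (2 * Λ) = (j : ℝ) ∨ x * q + q / (2 * Λ) = (j : ℝ)) :
    cc a q j = 0 := by
  rcases Nat.even_or_odd q with hev | hod
  · have hoddq : ¬ Odd q := Nat.not_odd_iff_even.mpr hev
    obtain ⟨m, hm⟩ := hev
    have hmz : (q : ℤ) / 2 = (m : ℤ) := by omega
    have hmr : (q : ℝ) / 2 = (m : ℝ) := by
      have : (q : ℝ) = (m : ℝ) + m := by exact_mod_cast hm
      linarith
    by_cases hpar : Even (j + (q : ℤ) / 2)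
    · exfalso
      have := hns.2 ⟨m, hm⟩ (j + (q : ℤ) / 2) hpar
      rcases h with h | h
      · exact this.1 (by rw [h, hmr, hmz]; push_cast; ring)
      · exact this.2 (by rw [h, hmr, hmz]; push_cast; ring)
    · simp [cc, hoddq, hpar]
  · exfalso
    rcases h with h | h
    · exact (hns.1 hod j).1 h
    · exact (hns.1 hod j).2 h

theorem stmt6 (Λ : ℝ) (hΛ : 1 < Λ) (N : ℕ) (hN : 0 < N) (a : ℤ) (q : ℕ)
    (hq : 0 < q) (hcop : Int.gcd a q = 1) (x : ℝ) (hx : x ∈ Set.Ioo (0 : ℝ) (1 / 2))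
    (hns : Nonsingular Λ q x) :
    ∃ l u : ℝ, l < x ∧ x < u ∧ ∀ y ∈ Set.Ioo l u,
      pden N q Λ a y =
        (Λ / q) * (Norm.norm (Sminus N q Λ a x * e (2 * N * Λ * y) - Splus N q Λ a x)) ^ 2 := by
  have hq' : (0 : ℝ) < q := by exact_mod_cast hq
  obtain ⟨δ1, hδ1, H1⟩ := ceil_local (x * q - q / (2 * Λ))
  obtain ⟨δ2, hδ2, H2⟩ := floor_local (x * q + q / (2 * Λ))
  set r : ℝ := min δ1 δ2 / q with hr
  have hrpos : 0 < r := by positivity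
  refine ⟨x - r, x + r, by linarith, by linarith, fun y hy => ?_⟩
  have hyx : |y - x| < r := abs_sub_lt_iff.mpr ⟨by linarith [hy.2], by linarith [hy.1]⟩
  have hdist : ∀ c : ℝ, |(y * q + c) - (x * q + c)| < min δ1 δ2 := by
    intro c
    have h1 : (y * q + c) - (x * q + c) = (y - x) * q := by ring
    rw [h1, abs_mul, abs_of_pos hq']
    calc |y - x| * q < r * q := by
          exact mul_lt_mul_of_pos_right hyx hq'
      _ = min δ1 δ2 := div_mul_cancel₀ _ (ne_of_gt hq')
  have hL : |(y * q - q / (2 * Λ)) - (x * q - q / (2 * Λ))| < δ1 := by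
    have := hdist (-(q / (2 * Λ)))
    simp only [← sub_eq_add_neg] at this
    exact lt_of_lt_of_le this (min_le_left _ _)
  have hU : |(y * q + q / (2 * Λ)) - (x * q + q / (2 * Λ))| < δ2 := by
    exact lt_of_lt_of_le (hdist (q / (2 * Λ))) (min_le_right _ _)
  have hcL := H1 _ hL
  have hfU := H2 _ hU
  -- local constancy of the relevant sums
  have hsum : ∀ f : ℤ → ℂ,
      ∑ k ∈ Iset Λ q y, cc a q k * f k = ∑ k ∈ Iset Λ q x, cc a q k * f k := by
    intro f
    unfold Iset
    apply sum_Icc_cases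
    · rcases hcL with h | ⟨h, ht⟩
      · exact Or.inl h
      · exact Or.inr ⟨h, by rw [cc_boundary_zero Λ q x a hns _ (Or.inl ht), zero_mul]⟩
    · rcases hfU with h | ⟨h, ht⟩
      · exact Or.inl h
      · exact Or.inr ⟨h, by rw [cc_boundary_zero Λ q x a hns _ (Or.inr ht), zero_mul]⟩
  -- the key algebraic identity
  set A : ℝ := (N : ℝ) * Λ * y with hA
  have key : ∑ k ∈ Iset Λ q x, cc a q k * (Real.sin (2 * Real.pi * N * Λ * (y - k / q)) : ℂ)
      = e (-A) * (Sminus N q Λ a x * e (2 * A) - Splus N q Λ a x) / (2 * Complex.I) := by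
    unfold Sminus Splus
    rw [Finset.sum_mul, ← Finset.sum_sub_distrib, Finset.mul_sum, Finset.sum_div]
    apply Finset.sum_congr rfl
    intro k _
    have harg : 2 * Real.pi * (N : ℝ) * Λ * (y - k / q)
        = 2 * Real.pi * (A - (N : ℝ) * Λ * k / q) := by rw [hA]; ring
    rw [harg, sin_e]
    have h1 : e (A - (N : ℝ) * Λ * k / q) = e (-A) * (e (-((N : ℝ) * Λ * k / q)) * e (2 * A)) := by
      rw [← e_add, ← e_add]; congr 1; ring
    have h2 : e (-(A - (N : ℝ) * Λ * k / q)) = e (-A) * e ((N : ℝ) * Λ * k / q) := by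
      rw [← e_add]; congr 1; ring
    rw [h1, h2]
    ring
  have hearg : (2 * (N : ℝ) * Λ * y) = 2 * A := by rw [hA]; ring
  rw [hearg]
  unfold pden
  rw [hsum (fun k => (Real.sin (2 * Real.pi * N * Λ * (y - k / q)) : ℂ))]
  rw [key]
  rw [norm_div, norm_mul, abs_e, norm_mul]
  simp only [Complex.norm_two, Complex.norm_I, mul_one, one_mul]
  ring
end

section
/- Assume q is divisible by 4 and Λ > q/2. Let r = 1/q − 1/(2Λ) and c_m = (2m+1)/q for integers m with 0 ≤ m < q/4. Then: (i) p vanishes identically on [c_m − r, c_m + r] ∩ [0,1/2] for each such m; (ii) every nonempty open interval J ⊆ (0,1/2) on which p is constant is contained in some [c_m − r, c_m + r], and the constant value of p on J is 0. -/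
lemma abs_e_s8 (x : ℝ) : ‖e x‖ = 1 := by
  rw [e, Complex.norm_exp]
  norm_num [Complex.mul_re, Complex.mul_im]

lemma ccOdd (a : ℤ) (q : ℕ) (h4 : 4 ∣ q) (k : ℤ) (hk : ¬ Even k) : cc a q k = 0 := by
  obtain ⟨t, ht⟩ := h4
  have h1 : ¬ Odd q := by simp [ht, Nat.odd_iff]; omega
  have h2 : ¬ Even (k + (q : ℤ) / 2) := by
    have hq2 : (q : ℤ) / 2 = 2 * t := by subst ht; push_cast; omega
    intro h
    apply hk
    rw [hq2] at h
    obtain ⟨c, hc⟩ := h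
    exact ⟨c - t, by omega⟩
  rw [cc, if_neg h1, if_neg h2]

lemma ccEven (a : ℤ) (q : ℕ) (h4 : 4 ∣ q) (k : ℤ) (hk : Even k) :
    cc a q k = (Real.sqrt 2 : ℂ) * e ((invMod a q : ℝ) * (k : ℝ) ^ 2 / (4 * q)) := by
  obtain ⟨t, ht⟩ := h4
  have h1 : ¬ Odd q := by simp [ht, Nat.odd_iff]; omega
  have h2 : Even (k + (q : ℤ) / 2) := by
    have hq2 : (q : ℤ) / 2 = 2 * t := by subst ht; push_cast; omega
    rw [hq2]
    obtain ⟨c, hc⟩ := hk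
    exact ⟨c + t, by omega⟩
  rw [cc, if_neg h1, if_pos h2]

lemma sin_const_zero (β γ l u : ℝ) (hβ : β ≠ 0) (hlu : l < u)
    (h : ∀ x ∈ Set.Ioo l u, Real.sin (β * x + γ) = 0) : False := by
  set x₀ := (l + u) / 2 with hx₀def
  have hx₀ : x₀ ∈ Set.Ioo l u := ⟨by rw [hx₀def]; linarith, by rw [hx₀def]; linarith⟩
  have h1 : HasDerivAt (fun x : ℝ => Real.sin (β * x + γ)) (Real.cos (β * x₀ + γ) * β) x₀ :=
    (Real.hasDerivAt_sin _).comp x₀ (by simpa using ((hasDerivAt_id x₀).const_mul β).add_const γ)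
  have heq : (fun x : ℝ => Real.sin (β * x + γ)) =ᶠ[nhds x₀] fun _ => (0:ℝ) :=
    Filter.eventuallyEq_of_mem (Ioo_mem_nhds hx₀.1 hx₀.2) h
  have h2 : Real.cos (β * x₀ + γ) * β = 0 := by
    rw [← h1.deriv, heq.deriv_eq, deriv_const]
  have hc : Real.cos (β * x₀ + γ) = 0 := by
    rcases mul_eq_zero.mp h2 with h | h
    · exact h
    · exact absurd h hβ
  have hs : Real.sin (β * x₀ + γ) = 0 := h x₀ hx₀
  have := Real.sin_sq_add_cos_sq (β * x₀ + γ)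
  rw [hs, hc] at this
  norm_num at this

lemma sin_sq_const (α γ l u v : ℝ) (hα : α ≠ 0) (hlu : l < u)
    (h : ∀ x ∈ Set.Ioo l u, Real.sin (α * x + γ) ^ 2 = v) : False := by
  apply sin_const_zero (2*α) (2*γ) l u (by simpa using hα) hlu
  intro x hx
  have h1 : HasDerivAt (fun x : ℝ => Real.sin (α * x + γ)) (Real.cos (α * x + γ) * α) x :=
    (Real.hasDerivAt_sin _).comp x (by simpa using ((hasDerivAt_id x).const_mul α).add_const γ)
  have h2 : HasDerivAt (fun x : ℝ => Real.sin (α * x + γ) ^ 2)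
      ((2:ℕ) * Real.sin (α * x + γ) ^ 1 * (Real.cos (α * x + γ) * α)) x := h1.pow 2
  have heq : (fun x : ℝ => Real.sin (α * x + γ) ^ 2) =ᶠ[nhds x] fun _ => v :=
    Filter.eventuallyEq_of_mem (Ioo_mem_nhds hx.1 hx.2) h
  have h3 : (2:ℕ) * Real.sin (α * x + γ) ^ 1 * (Real.cos (α * x + γ) * α) = 0 := by
    rw [← h2.deriv, heq.deriv_eq, deriv_const]
  have h4 : 2 * Real.sin (α * x + γ) * Real.cos (α * x + γ) = 0 := by
    rw [pow_one] at h3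
    push_cast at h3
    have h3' : (2 * Real.sin (α * x + γ) * Real.cos (α * x + γ)) * α = 0 := by
      linear_combination h3
    rcases mul_eq_zero.mp h3' with h' | h'
    · exact h'
    · exact absurd h' hα
  rw [show 2*α*x + 2*γ = 2*(α*x+γ) by ring, Real.sin_two_mul]
  exact h4

lemma mem_Iset (Λ : ℝ) (q : ℕ) (x : ℝ) (k : ℤ) :
    k ∈ Iset Λ q x ↔ x * q - q / (2 * Λ) ≤ k ∧ (k : ℝ) ≤ x * q + q / (2 * Λ) := by
  rw [Iset, Finset.mem_Icc, Int.ceil_le, Int.le_floor]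

lemma pden_zero_band (N q : ℕ) (Λ : ℝ) (a : ℤ) (x : ℝ) (hq : 0 < q) (hΛ : 0 < Λ)
    (h4 : 4 ∣ q) (m : ℤ) (hband : |x * q - (2 * (m:ℝ) + 1)| ≤ 1 - (q:ℝ)/(2*Λ)) :
    pden N q Λ a x = 0 := by
  have hqR : (0:ℝ) < q := by exact_mod_cast hq
  have hΛ' : (2:ℝ) * Λ ≠ 0 := by positivity
  rw [pden]
  have hsum : (∑ k ∈ Iset Λ q x,
      cc a q k * (Real.sin (2 * Real.pi * N * Λ * (x - k / q)) : ℂ)) = 0 := by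
    apply Finset.sum_eq_zero
    intro k hk
    rw [mem_Iset] at hk
    by_cases hke : Even k
    · -- the sine vanishes
      have habsA : |x * q - (k:ℝ)| ≤ (q:ℝ)/(2*Λ) := abs_le.mpr ⟨by linarith [hk.1], by linarith [hk.2]⟩
      have hodd : Odd (k - (2*m+1)) := by
        obtain ⟨c, hc⟩ := hke
        exact ⟨c - m - 1, by omega⟩
      have h1le : (1:ℝ) ≤ |(k:ℝ) - (2*(m:ℝ)+1)| := by
        have : (1:ℤ) ≤ |k - (2*m+1)| := by
          obtain ⟨c, hc⟩ := hodd
          rcases abs_cases (k - (2*m+1)) with ⟨h,_⟩|⟨h,_⟩ <;> omega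
        calc (1:ℝ) = ((1:ℤ):ℝ) := by norm_num
        _ ≤ ((|k - (2*m+1)|:ℤ):ℝ) := by exact_mod_cast this
        _ = |(k:ℝ) - (2*(m:ℝ)+1)| := by rw [Int.cast_abs]; push_cast; ring_nf
      have hgeA : (q:ℝ)/(2*Λ) ≤ |x * q - (k:ℝ)| := by
        have htr : |(k:ℝ) - (2*(m:ℝ)+1)| ≤ |x * q - (2*(m:ℝ)+1)| + |x * q - (k:ℝ)| := by
          have := abs_sub (x * q - (k:ℝ)) (x * q - (2*(m:ℝ)+1))
          calc |(k:ℝ) - (2*(m:ℝ)+1)| = |(x*q - (2*(m:ℝ)+1)) - (x*q - (k:ℝ))| := by ring_nf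
          _ ≤ |x * q - (2*(m:ℝ)+1)| + |x * q - (k:ℝ)| := abs_sub _ _
        linarith
      have heqA : |x * q - (k:ℝ)| = (q:ℝ)/(2*Λ) := le_antisymm habsA hgeA
      have hsin : Real.sin (2 * Real.pi * N * Λ * (x - k / q)) = 0 := by
        rcases abs_eq (by positivity : (0:ℝ) ≤ (q:ℝ)/(2*Λ)) |>.mp heqA with hA | hA
        · have hx : x - (k:ℝ)/q = 1/(2*Λ) := by
            field_simp at hA ⊢
            linarith
          rw [hx, show 2 * Real.pi * N * Λ * (1/(2*Λ)) = N * Real.pi by field_simp]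
          exact Real.sin_nat_mul_pi N
        · have hx : x - (k:ℝ)/q = -(1/(2*Λ)) := by
            field_simp at hA ⊢
            linarith
          rw [hx, show 2 * Real.pi * N * Λ * (-(1/(2*Λ))) = -(N * Real.pi) by field_simp]
          rw [Real.sin_neg, Real.sin_nat_mul_pi N, neg_zero]
      rw [hsin]
      simp
    · rw [ccOdd a q h4 k hke, zero_mul]
  rw [hsum]
  simp

lemma pden_eq_single (N q : ℕ) (Λ : ℝ) (a : ℤ) (x : ℝ) (hq : 0 < q) (hΛ : 0 < Λ)
    (h4 : 4 ∣ q) (hfrag : (q : ℝ) / 2 < Λ) (k₀ : ℤ) (hk₀ : Even k₀)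
    (hnear : |x * q - (k₀:ℝ)| ≤ (q:ℝ)/(2*Λ)) :
    pden N q Λ a x = (8 * Λ / q) * (Real.sin (2 * Real.pi * N * Λ * (x - k₀/q)))^2 := by
  have hqR : (0:ℝ) < q := by exact_mod_cast hq
  have hmem : k₀ ∈ Iset Λ q x := by
    rw [mem_Iset]
    rcases abs_le.mp hnear with ⟨h1, h2⟩
    constructor <;> linarith
  have hsum : (∑ k ∈ Iset Λ q x,
      cc a q k * (Real.sin (2 * Real.pi * N * Λ * (x - k / q)) : ℂ)) =
      cc a q k₀ * (Real.sin (2 * Real.pi * N * Λ * (x - k₀ / q)) : ℂ) := by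
    apply Finset.sum_eq_single_of_mem k₀ hmem
    intro k hk hne
    by_cases hke : Even k
    · exfalso
      rw [mem_Iset] at hk
      have habsA : |x * q - (k:ℝ)| ≤ (q:ℝ)/(2*Λ) :=
        abs_le.mpr ⟨by linarith [hk.1], by linarith [hk.2]⟩
      have hdist : |(k:ℝ) - (k₀:ℝ)| ≤ (q:ℝ)/Λ := by
        calc |(k:ℝ) - (k₀:ℝ)| = |(x*q - (k₀:ℝ)) - (x*q - (k:ℝ))| := by ring_nf
        _ ≤ |x*q - (k₀:ℝ)| + |x*q - (k:ℝ)| := abs_sub _ _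
        _ ≤ (q:ℝ)/(2*Λ) + (q:ℝ)/(2*Λ) := by linarith
        _ = (q:ℝ)/Λ := by field_simp; ring
      have h2le : (2:ℝ) ≤ |(k:ℝ) - (k₀:ℝ)| := by
        have : (2:ℤ) ≤ |k - k₀| := by
          obtain ⟨c, hc⟩ := hke
          obtain ⟨d, hd⟩ := hk₀
          rcases abs_cases (k - k₀) with ⟨h,_⟩|⟨h,_⟩ <;> omega
        calc (2:ℝ) = ((2:ℤ):ℝ) := by norm_num
        _ ≤ ((|k - k₀|:ℤ):ℝ) := by exact_mod_cast this
        _ = |(k:ℝ) - (k₀:ℝ)| := by rw [Int.cast_abs]; push_cast; ring_nf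
      have hlt : (q:ℝ)/Λ < 2 := by
        rw [div_lt_iff₀ hΛ]; linarith
      linarith
    · rw [ccOdd a q h4 k hke, zero_mul]
  rw [pden, hsum, ccEven a q h4 k₀ hk₀]
  rw [norm_mul, norm_mul, abs_e_s8, Complex.norm_real, Real.norm_eq_abs]
  have h2 : (Real.sqrt 2) ^ 2 = 2 := Real.sq_sqrt (by norm_num)
  rw [abs_of_nonneg (Real.sqrt_nonneg 2), mul_one, mul_pow, h2, Complex.norm_real, Real.norm_eq_abs, sq_abs]
  ring

theorem stmt8 (Λ : ℝ) (hΛ : 1 < Λ) (N : ℕ) (hN : 0 < N) (a : ℤ) (q : ℕ)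
    (hq : 0 < q) (hcop : Int.gcd a q = 1) (h4 : 4 ∣ q) (hfrag : (q : ℝ) / 2 < Λ) :
    (∀ m : ℤ, 0 ≤ m → (m : ℝ) < (q : ℝ) / 4 →
      ∀ x ∈ Set.Icc ((2 * (m : ℝ) + 1) / q - (1 / q - 1 / (2 * Λ)))
          ((2 * (m : ℝ) + 1) / q + (1 / q - 1 / (2 * Λ))) ∩ Set.Icc (0 : ℝ) (1 / 2),
        pden N q Λ a x = 0) ∧
    (∀ l u : ℝ, l < u → Set.Ioo l u ⊆ Set.Ioo (0 : ℝ) (1 / 2) →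
      (∃ v : ℝ, ∀ x ∈ Set.Ioo l u, pden N q Λ a x = v) →
      (∃ m : ℤ, 0 ≤ m ∧ (m : ℝ) < (q : ℝ) / 4 ∧
        Set.Ioo l u ⊆ Set.Icc ((2 * (m : ℝ) + 1) / q - (1 / q - 1 / (2 * Λ)))
          ((2 * (m : ℝ) + 1) / q + (1 / q - 1 / (2 * Λ)))) ∧
      ∀ x ∈ Set.Ioo l u, pden N q Λ a x = 0) := by
  have hΛ0 : (0:ℝ) < Λ := by linarith
  have hqR : (0:ℝ) < q := by exact_mod_cast hq
  have hq0 : (q:ℝ) ≠ 0 := ne_of_gt hqR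
  have hΛne : Λ ≠ 0 := ne_of_gt hΛ0
  have hL : (0:ℝ) < (q:ℝ)/(2*Λ) := by positivity
  have hL1 : (q:ℝ)/(2*Λ) < 1 := by rw [div_lt_one (by positivity)]; linarith
  have hband_of_Icc : ∀ (m : ℤ) (x : ℝ),
      x ∈ Set.Icc ((2 * (m : ℝ) + 1) / q - (1 / q - 1 / (2 * Λ)))
          ((2 * (m : ℝ) + 1) / q + (1 / q - 1 / (2 * Λ))) →
      |x * q - (2 * (m:ℝ) + 1)| ≤ 1 - (q:ℝ)/(2*Λ) := by
    intro m x hx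
    obtain ⟨h1, h2⟩ := hx
    rw [abs_le]
    have e1 : ((2 * (m : ℝ) + 1) / q - (1 / q - 1 / (2 * Λ))) * q
        = (2 * (m:ℝ) + 1) - (1 - (q:ℝ)/(2*Λ)) := by field_simp
    have e2 : ((2 * (m : ℝ) + 1) / q + (1 / q - 1 / (2 * Λ))) * q
        = (2 * (m:ℝ) + 1) + (1 - (q:ℝ)/(2*Λ)) := by field_simp
    have h1q := mul_le_mul_of_nonneg_right h1 hqR.le
    have h2q := mul_le_mul_of_nonneg_right h2 hqR.le
    rw [e1] at h1q
    rw [e2] at h2q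
    constructor <;> linarith
  constructor
  · intro m _ _ x hx
    exact pden_zero_band N q Λ a x hq hΛ0 h4 m (hband_of_Icc m x hx.1)
  · intro l u hlu hsub hconst
    obtain ⟨v, hv⟩ := hconst
    have hNR : (0:ℝ) < (N:ℝ) := by exact_mod_cast hN
    have hα : (2 * Real.pi * N * Λ) ≠ 0 := by positivity
    -- Step 1: no even integer within distance q/(2Λ) of x*q
    have hKey : ∀ x ∈ Set.Ioo l u, ∀ k : ℤ, Even k → (q:ℝ)/(2*Λ) ≤ |x * q - (k:ℝ)| := by
      intro x hx k hkeven
      by_contra hcon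
      push_neg at hcon
      set ε := min (min (x - l) (u - x)) (((q:ℝ)/(2*Λ) - |x*q - (k:ℝ)|)/q) with hεdef
      have hε0 : 0 < ε := by
        apply lt_min (lt_min (by linarith [hx.1]) (by linarith [hx.2]))
        exact div_pos (by linarith) hqR
      have hεq : ε * q ≤ (q:ℝ)/(2*Λ) - |x*q - (k:ℝ)| := by
        have h3 : ε ≤ ((q:ℝ)/(2*Λ) - |x*q - (k:ℝ)|)/q := min_le_right _ _
        calc ε * q ≤ (((q:ℝ)/(2*Λ) - |x*q - (k:ℝ)|)/q) * q :=
          mul_le_mul_of_nonneg_right h3 hqR.le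
        _ = (q:ℝ)/(2*Λ) - |x*q - (k:ℝ)| := by field_simp
      have hsin : ∀ y ∈ Set.Ioo (x - ε) (x + ε),
          Real.sin ((2 * Real.pi * N * Λ) * y + (-(2 * Real.pi * N * Λ * k / q))) ^ 2
            = ((q:ℝ)/(8*Λ)) * v := by
        intro y hy
        have hyJ : y ∈ Set.Ioo l u := by
          have h1 : ε ≤ x - l := le_trans (min_le_left _ _) (min_le_left _ _)
          have h2 : ε ≤ u - x := le_trans (min_le_left _ _) (min_le_right _ _)
          exact ⟨by linarith [hy.1], by linarith [hy.2]⟩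
        have hyx : |y - x| < ε := abs_sub_lt_iff.mpr ⟨by linarith [hy.2], by linarith [hy.1]⟩
        have hnear : |y * q - (k:ℝ)| ≤ (q:ℝ)/(2*Λ) := by
          have hyq : |y - x| * q < ε * q := mul_lt_mul_of_pos_right hyx hqR
          calc |y * q - (k:ℝ)| = |(x*q - (k:ℝ)) + (y - x)*q| := by ring_nf
          _ ≤ |x*q - (k:ℝ)| + |(y-x)*q| := abs_add_le _ _
          _ = |x*q - (k:ℝ)| + |y-x| * q := by rw [abs_mul, abs_of_nonneg hqR.le]
          _ ≤ (q:ℝ)/(2*Λ) := by linarith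
        have hpden := pden_eq_single N q Λ a y hq hΛ0 h4 hfrag k hkeven hnear
        rw [hv y hyJ] at hpden
        rw [show (2 * Real.pi * N * Λ) * y + (-(2 * Real.pi * N * Λ * k / q))
            = 2 * Real.pi * N * Λ * (y - k / q) by field_simp; ring]
        have : Real.sin (2 * Real.pi * N * Λ * (y - k/q)) ^ 2
            = ((q:ℝ)/(8*Λ)) * ((8*Λ/q) * Real.sin (2 * Real.pi * N * Λ * (y - k/q)) ^ 2) := by
          field_simp
        rw [this, ← hpden]
      exact sin_sq_const (2 * Real.pi * N * Λ) (-(2 * Real.pi * N * Λ * k / q))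
        (x - ε) (x + ε) (((q:ℝ)/(8*Λ)) * v) hα (by linarith) hsin
    -- Step 2: all points have the same floor of x*q/2
    have hgap : ∀ x y : ℝ, x ∈ Set.Ioo l u → y ∈ Set.Ioo l u → x ≤ y →
        ⌊x * q / 2⌋ = ⌊y * q / 2⌋ := by
      intro x y hx hy hxy
      by_contra hne
      have h1 : ⌊x * q / 2⌋ < ⌊y * q / 2⌋ :=
        lt_of_le_of_ne (Int.floor_le_floor (by nlinarith)) hne
      set j : ℤ := ⌊x * q / 2⌋ + 1 with hjdef
      have h2 : x * q / 2 < (j:ℝ) := by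
        rw [hjdef]; push_cast; exact Int.lt_floor_add_one _
      have h3 : (j:ℝ) ≤ y * q / 2 := by
        have hj : (j:ℝ) ≤ (⌊y * q / 2⌋ : ℝ) := by exact_mod_cast h1
        linarith [Int.floor_le (y * q / 2)]
      set z : ℝ := 2 * (j:ℝ) / q with hzdef
      have hz : z ∈ Set.Ioo l u := by
        have hxz : x < z := by
          rw [hzdef, lt_div_iff₀ hqR]; linarith
        have hzy : z ≤ y := by
          rw [hzdef, div_le_iff₀ hqR]; linarith
        exact ⟨lt_of_lt_of_le hx.1 (le_of_lt hxz), lt_of_le_of_lt hzy hy.2⟩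
      have hk := hKey z hz (2 * j) ⟨j, by ring⟩
      have hzq : z * q = 2 * (j:ℝ) := by rw [hzdef]; field_simp
      rw [hzq] at hk
      push_cast at hk
      simp at hk
      linarith
    set xb : ℝ := (l + u) / 2 with hxbdef
    have hxb : xb ∈ Set.Ioo l u := ⟨by rw [hxbdef]; linarith, by rw [hxbdef]; linarith⟩
    set m : ℤ := ⌊xb * q / 2⌋ with hmdef
    have hfloor : ∀ x ∈ Set.Ioo l u, ⌊x * q / 2⌋ = m := by
      intro x hx
      rcases le_total x xb with h | h
      · exact hgap x xb hx hxb h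
      · exact (hgap xb x hxb hx h).symm
    -- band containment for each x in J
    have hband : ∀ x ∈ Set.Ioo l u, |x * q - (2 * (m:ℝ) + 1)| ≤ 1 - (q:ℝ)/(2*Λ) := by
      intro x hx
      have hm := hfloor x hx
      have hfl : (m:ℝ) ≤ x * q / 2 := by rw [← hm]; exact Int.floor_le _
      have hfu : x * q / 2 < (m:ℝ) + 1 := by
        have h := Int.lt_floor_add_one (x * q / 2)
        rw [hm] at h
        exact h
      have hlow := hKey x hx (2 * m) ⟨m, by ring⟩
      have hhigh := hKey x hx (2 * m + 2) ⟨m + 1, by ring⟩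
      push_cast at hlow hhigh
      rw [abs_of_nonneg (by linarith : (0:ℝ) ≤ x * q - 2 * (m:ℝ))] at hlow
      rw [abs_of_nonpos (by linarith : x * q - (2 * (m:ℝ) + 2) ≤ 0)] at hhigh
      rw [abs_le]
      constructor <;> linarith
    refine ⟨⟨m, ?_, ?_, ?_⟩, ?_⟩
    · -- 0 ≤ m
      have h0 : (0:ℝ) < xb := (hsub hxb).1
      have : (0:ℝ) ≤ xb * q / 2 := by positivity
      rw [hmdef]
      exact Int.floor_nonneg.mpr this
    · -- m < q/4
      have h0 : xb < 1/2 := (hsub hxb).2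
      have h1 : xb * q / 2 < (q:ℝ)/4 := by nlinarith
      have h2 : (m:ℝ) ≤ xb * q / 2 := by rw [hmdef]; exact Int.floor_le _
      linarith
    · -- containment in the closed band
      intro x hx
      have hb := hband x hx
      rw [abs_le] at hb
      constructor
      · have e1 : ((2 * (m : ℝ) + 1) / q - (1 / q - 1 / (2 * Λ))) * q
            = (2 * (m:ℝ) + 1) - (1 - (q:ℝ)/(2*Λ)) := by field_simp
        have hx1 : ((2 * (m : ℝ) + 1) / q - (1 / q - 1 / (2 * Λ))) * q ≤ x * q := by
          rw [e1]; linarith [hb.1]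
        exact le_of_mul_le_mul_right hx1 hqR
      · have e2 : ((2 * (m : ℝ) + 1) / q + (1 / q - 1 / (2 * Λ))) * q
            = (2 * (m:ℝ) + 1) + (1 - (q:ℝ)/(2*Λ)) := by field_simp
        have hx2 : x * q ≤ ((2 * (m : ℝ) + 1) / q + (1 / q - 1 / (2 * Λ))) * q := by
          rw [e2]; linarith [hb.2]
        exact le_of_mul_le_mul_right hx2 hqR
    · intro x hx
      exact pden_zero_band N q Λ a x hq hΛ0 h4 m (hband x hx)
end
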